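/- Under the hypotheses of the single-slope-change case (f continuous nondecreasing, slopes < ν before γ and ≥ ν after γ, ν > 0, x₁ < x₂, x°(t) = x₂ for t < γ - x₂, x°(t) = γ - t on [γ-x₂, γ-x₁), x°(t) = x₁ for t ≥ γ - x₁, g(x) = -ν(x-x₂) on [x₁,x₂) else 0), the function h(t) = f(x°(t) + t) + g(x°(t)) equals f(x₂ + t) for t < γ - x₂, equals νt + f(γ) - ν(γ - x₂) for γ - x₂ ≤ t < γ - x₁, and equals f(x₁ + t) + ν(x₂ - x₁) for t ≥ γ - x₁; moreover h is continuous and nondecreasing. -/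

import Mathlib

/-- The jump function `g(x) = -ν (x - x₂)` on `[x₁, x₂)` and `0` elsewhere. -/
noncomputable def gfun (ν x₁ x₂ : ℝ) : ℝ → ℝ := fun x =>
  if x₁ ≤ x ∧ x < x₂ then -ν * (x - x₂) else 0

/-- The minimizer in the single-slope-change case. -/
noncomputable def xopt (x₁ x₂ γ : ℝ) : ℝ → ℝ := fun t =>
  if t < γ - x₂ then x₂ else if t < γ - x₁ then γ - t else x₁

/-- Explicit piecewise form of the value function. -/
noncomputable def Hfun (f : ℝ → ℝ) (ν x₁ x₂ γ : ℝ) : ℝ → ℝ := fun t =>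
  if t ≤ γ - x₂ then f (x₂ + t)
  else if t ≤ γ - x₁ then ν * t + (f γ - ν * (γ - x₂))
  else f (x₁ + t) + ν * (x₂ - x₁)

lemma Hfun_eq (f : ℝ → ℝ) (ν x₁ x₂ γ : ℝ) (hx : x₁ < x₂) (t : ℝ) :
    f (xopt x₁ x₂ γ t + t) + gfun ν x₁ x₂ (xopt x₁ x₂ γ t) = Hfun f ν x₁ x₂ γ t := by
  unfold xopt gfun Hfun
  rcases lt_trichotomy t (γ - x₂) with h | h | h
  · rw [if_pos h, if_pos h.le, if_neg (by rintro ⟨-, h2⟩; exact lt_irrefl _ h2), add_zero]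
  · subst h
    rw [if_neg (lt_irrefl _), if_pos (by linarith), if_pos (le_refl _)]
    have h1 : γ - (γ - x₂) = x₂ := by ring
    rw [h1, if_neg (by rintro ⟨-, h2⟩; exact lt_irrefl _ h2), add_zero, add_comm]
  · rw [if_neg (not_lt.2 h.le), if_neg (not_le.2 h)]
    rcases lt_trichotomy t (γ - x₁) with h2 | h2 | h2
    · rw [if_pos h2, if_pos h2.le, if_pos ⟨by linarith, by linarith⟩]
      have h3 : γ - t + t = γ := by ring
      rw [h3]; ring
    · subst h2
      rw [if_neg (lt_irrefl _), if_pos (le_refl _), if_pos ⟨le_refl _, hx⟩]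
      have h3 : x₁ + (γ - x₁) = γ := by ring
      rw [h3]; ring
    · rw [if_neg (not_lt.2 h2.le), if_neg (not_le.2 h2), if_pos ⟨le_refl _, hx⟩]
      ring

lemma Hfun_cont (f : ℝ → ℝ) (ν x₁ x₂ γ : ℝ) (hfc : Continuous f) (hx : x₁ < x₂) :
    Continuous (Hfun f ν x₁ x₂ γ) := by
  unfold Hfun
  apply Continuous.if_le (hfc.comp (by continuity)) _ continuous_id continuous_const
  · intro x hxe
    have hxe' : x = γ - x₂ := hxe
    subst hxe'
    rw [if_pos (by linarith)]
    show f (x₂ + (γ - x₂)) = _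
    have h1 : x₂ + (γ - x₂) = γ := by ring
    rw [h1]; ring
  · apply Continuous.if_le (by continuity) (by fun_prop) continuous_id continuous_const
    intro x hxe
    have hxe' : x = γ - x₁ := hxe
    subst hxe'
    have h1 : x₁ + (γ - x₁) = γ := by ring
    rw [h1]; ring

lemma Hfun_mono (f : ℝ → ℝ) (ν x₁ x₂ γ : ℝ) (hfm : Monotone f)
    (hν : 0 < ν) (hx : x₁ < x₂) : Monotone (Hfun f ν x₁ x₂ γ) := by
  intro s t hst
  unfold Hfun
  have hνst : ν * s ≤ ν * t := by nlinarith
  split_ifs with h1 h2 h3 h4 h5 h6 h7 h8 <;> try linarith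
  · exact hfm (by linarith)
  · -- s ≤ γ - x₂ < t ≤ γ - x₁ : f (x₂ + s) ≤ ν t + (f γ - ν (γ - x₂))
    have := hfm (show x₂ + s ≤ γ by linarith)
    nlinarith
  · -- s ≤ γ - x₂, t > γ - x₁
    have h := hfm (show x₂ + s ≤ γ by linarith)
    have h' := hfm (show γ ≤ x₁ + t by linarith)
    nlinarith
  · -- s middle, t > γ - x₁
    have h' := hfm (show γ ≤ x₁ + t by linarith)
    nlinarith
  · exact add_le_add (hfm (by linarith)) le_rfl

theorem value_function_single_slope_change
    (f : ℝ → ℝ) (ν x₁ x₂ γ : ℝ)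
    (hfc : Continuous f) (hfm : Monotone f)
    (hν : 0 < ν) (hx : x₁ < x₂)
    (hslope₁ : ∀ u v : ℝ, u < v → v ≤ γ → f v - f u < ν * (v - u))
    (hslope₂ : ∀ u v : ℝ, γ ≤ u → u ≤ v → ν * (v - u) ≤ f v - f u) :
    (∀ t : ℝ, t < γ - x₂ →
      f (xopt x₁ x₂ γ t + t) + gfun ν x₁ x₂ (xopt x₁ x₂ γ t) = f (x₂ + t)) ∧
    (∀ t : ℝ, γ - x₂ ≤ t → t < γ - x₁ →
      f (xopt x₁ x₂ γ t + t) + gfun ν x₁ x₂ (xopt x₁ x₂ γ t)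
        = ν * t + (f γ - ν * (γ - x₂))) ∧
    (∀ t : ℝ, γ - x₁ ≤ t →
      f (xopt x₁ x₂ γ t + t) + gfun ν x₁ x₂ (xopt x₁ x₂ γ t)
        = f (x₁ + t) + ν * (x₂ - x₁)) ∧
    Continuous (fun t => f (xopt x₁ x₂ γ t + t) + gfun ν x₁ x₂ (xopt x₁ x₂ γ t)) ∧
    Monotone (fun t => f (xopt x₁ x₂ γ t + t) + gfun ν x₁ x₂ (xopt x₁ x₂ γ t)) := by
  have hE : (fun t => f (xopt x₁ x₂ γ t + t) + gfun ν x₁ x₂ (xopt x₁ x₂ γ t))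
      = Hfun f ν x₁ x₂ γ := funext (Hfun_eq f ν x₁ x₂ γ hx)
  refine ⟨fun t ht => ?_, fun t ht1 ht2 => ?_, fun t ht => ?_, ?_, ?_⟩
  · rw [Hfun_eq f ν x₁ x₂ γ hx, Hfun, if_pos ht.le]
  · rw [Hfun_eq f ν x₁ x₂ γ hx, Hfun]
    rcases eq_or_lt_of_le ht1 with h | h
    · rw [if_pos h.ge, ← h]
      have h1 : x₂ + (γ - x₂) = γ := by ring
      rw [h1]; ring
    · rw [if_neg (not_le.2 h), if_pos ht2.le]
  · rw [Hfun_eq f ν x₁ x₂ γ hx, Hfun, if_neg (by push_neg; linarith)]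
    rcases eq_or_lt_of_le ht with h | h
    · rw [if_pos h.ge, ← h]
      have h1 : x₁ + (γ - x₁) = γ := by ring
      rw [h1]; ring
    · rw [if_neg (not_le.2 h)]
  · rw [hE]; exact Hfun_cont f ν x₁ x₂ γ hfc hx
  · rw [hE]; exact Hfun_mono f ν x₁ x₂ γ hfm hν hx
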